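/- For the matrix M, M w = e_{m−1}, where w := 2(2m−1)(1,3,5,…,2m−1)^T; i.e., the last column of M^{-1} equals w. -/

import Mathlib

open Matrix

/-- α_j = 1/(8j²−2). -/
noncomputable def alph (j : ℕ) : ℝ := 1 / (8 * (j : ℝ) ^ 2 - 2)

/-- The m×m tridiagonal matrix M with M₀₀ = 1/2, M_{j-1,j} = −α_j, M_{j,j-1} = α_j. -/
noncomputable def Mmat (m : ℕ) : Matrix (Fin m) (Fin m) ℝ :=
  Matrix.of fun i j =>
    if (i : ℕ) = 0 ∧ (j : ℕ) = 0 then 1 / 2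
    else if (i : ℕ) + 1 = (j : ℕ) then - alph (j : ℕ)
    else if (j : ℕ) + 1 = (i : ℕ) then alph (i : ℕ)
    else 0

/-- The m×m matrix N = e₀ e₀ᵀ. -/
noncomputable def Nmat (m : ℕ) : Matrix (Fin m) (Fin m) ℝ :=
  Matrix.of fun i j => if (i : ℕ) = 0 ∧ (j : ℕ) = 0 then 1 else 0

/-- The vector v: v_j = 2(2j+1) for even j (0 else) when m is odd;
    v_j = −2(2j+1) for odd j (0 else) when m is even. -/
noncomputable def vVec (m : ℕ) : Fin m → ℝ := fun j =>
  if Odd m then (if Even (j : ℕ) then 2 * (2 * (j : ℝ) + 1) else 0)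
  else (if Odd (j : ℕ) then -2 * (2 * (j : ℝ) + 1) else 0)

/-- The standard basis vector e₀. -/
noncomputable def e0vec (m : ℕ) : Fin m → ℝ := fun i => if (i : ℕ) = 0 then 1 else 0

/-- The vector w with w_j = 2(2m−1)(2j+1). -/
noncomputable def wVec (m : ℕ) : Fin m → ℝ := fun j => 2 * (2 * (m : ℝ) - 1) * (2 * (j : ℝ) + 1)

/-- M w = e_{m−1}, i.e. the last column of M⁻¹ equals w. -/
theorem Mmat_mulVec_wVec (m : ℕ) (hm : 1 ≤ m) :
    (Mmat m).mulVec (wVec m) = (fun i : Fin m => if (i : ℕ) = m - 1 then (1:ℝ) else 0) := by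
  funext i
  have hk : (i : ℕ) < m := i.isLt
  have hsum : (Mmat m).mulVec (wVec m) i
      = ∑ j ∈ Finset.range m,
        (if (i:ℕ) = 0 ∧ j = 0 then (1:ℝ)/2
          else if (i:ℕ) + 1 = j then - alph j
          else if j + 1 = (i:ℕ) then alph (i:ℕ)
          else 0) * (2 * (2*(m:ℝ) - 1) * (2*(j:ℝ)+1)) := by
    rw [← Fin.sum_univ_eq_sum_range]
    rfl
  rw [hsum]
  rcases Nat.eq_zero_or_pos (i : ℕ) with h0 | h1
  · -- row 0
    rcases eq_or_lt_of_le hm with hm1 | hm2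
    · -- m = 1
      subst hm1
      norm_num [h0, Finset.sum_range_one, alph]
    · -- m ≥ 2
      have hptw : ∀ j ∈ Finset.range m,
          (if (i:ℕ) = 0 ∧ j = 0 then (1:ℝ)/2
            else if (i:ℕ) + 1 = j then - alph j
            else if j + 1 = (i:ℕ) then alph (i:ℕ)
            else 0) * (2 * (2*(m:ℝ) - 1) * (2*(j:ℝ)+1))
          = (if j = 0 then (2*(m:ℝ)-1) else 0) + (if j = 1 then -(2*(m:ℝ)-1) else 0) := by
        intro j _
        rcases Nat.eq_zero_or_pos j with hj0 | hj1
        · subst hj0; simp [h0]; try ring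
        · rcases eq_or_lt_of_le (show 1 ≤ j from hj1) with hj1' | hj2
          · rw [← hj1']
            have : ¬ ((i:ℕ) = 0 ∧ (1:ℕ) = 0) := by omega
            simp only [h0, if_neg this, if_pos rfl, alph]
            norm_num
            all_goals ring
          · have h1 : ¬ ((i:ℕ) = 0 ∧ j = 0) := by omega
            have h2 : ¬ ((i:ℕ) + 1 = j) := by omega
            have h3 : ¬ (j + 1 = (i:ℕ)) := by omega
            have h4 : ¬ (j = 0) := by omega
            have h5 : ¬ (j = 1) := by omega
            simp [h1, h2, h3, h4, h5]
      rw [Finset.sum_congr rfl hptw, Finset.sum_add_distrib]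
      have e0 : (0:ℕ) ∈ Finset.range m := Finset.mem_range.mpr (by omega)
      have e1 : (1:ℕ) ∈ Finset.range m := Finset.mem_range.mpr (by omega)
      rw [Finset.sum_ite_eq' (Finset.range m) 0 (fun _ => (2*(m:ℝ)-1)),
          Finset.sum_ite_eq' (Finset.range m) 1 (fun _ => -(2*(m:ℝ)-1))]
      have : ¬ ((i:ℕ) = m - 1) := by omega
      simp [e0, e1, this]
  · -- row i ≥ 1
    set k := (i:ℕ) with hkdef
    have hkc : (1:ℝ) ≤ (k:ℝ) := by exact_mod_cast h1
    have hd1 : (8:ℝ) * (k:ℝ)^2 - 2 ≠ 0 := by nlinarith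
    have hd2 : (8:ℝ) * ((k:ℝ)+1)^2 - 2 ≠ 0 := by nlinarith
    have hA : alph k * (2 * (2*(m:ℝ) - 1) * (2*(((k-1:ℕ)):ℝ)+1))
        = (2*(m:ℝ)-1) / (2*(k:ℝ)+1) := by
      have hc : (((k-1:ℕ)):ℝ) = (k:ℝ) - 1 := by
        push_cast [Nat.cast_sub h1]; ring
      rw [hc, alph]
      have h21 : (2*(k:ℝ)+1) ≠ 0 := by nlinarith
      field_simp
      ring
    have hB : - alph (k+1) * (2 * (2*(m:ℝ) - 1) * (2*((k+1:ℕ):ℝ)+1))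
        = - ((2*(m:ℝ)-1) / (2*(k:ℝ)+1)) := by
      rw [alph]
      push_cast
      have h21 : (2*(k:ℝ)+1) ≠ 0 := by nlinarith
      have hd2' : (8:ℝ) * ((k:ℝ)+1)^2 - 2 ≠ 0 := hd2
      field_simp
      ring
    have hptw : ∀ j ∈ Finset.range m,
        (if k = 0 ∧ j = 0 then (1:ℝ)/2
          else if k + 1 = j then - alph j
          else if j + 1 = k then alph k
          else 0) * (2 * (2*(m:ℝ) - 1) * (2*(j:ℝ)+1))
        = (if j = k - 1 then alph k * (2 * (2*(m:ℝ) - 1) * (2*(((k-1:ℕ)):ℝ)+1)) else 0)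
          + (if j = k + 1 then - alph (k+1) * (2 * (2*(m:ℝ) - 1) * (2*((k+1:ℕ):ℝ)+1)) else 0) := by
      intro j _
      by_cases hj1 : j = k - 1
      · subst hj1
        have c1 : ¬ (k = 0 ∧ k - 1 = 0) := by omega
        have c2 : ¬ (k + 1 = k - 1) := by omega
        have c3 : (k - 1) + 1 = k := by omega
        have c4 : ¬ (k - 1 = k + 1) := by omega
        simp [c1, c2, c3, c4]
      · by_cases hj2 : j = k + 1
        · subst hj2
          have c1 : ¬ (k = 0 ∧ k + 1 = 0) := by omega
          have c2 : (k + 1 = k + 1) := rfl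
          have c3 : ¬ (k + 1 = k - 1) := by omega
          simp [c1, c3]
          try (push_cast; ring)
        · have c1 : ¬ (k = 0 ∧ j = 0) := by omega
          have c2 : ¬ (k + 1 = j) := by omega
          have c3 : ¬ (j + 1 = k) := by omega
          simp [c1, c2, c3, hj1, hj2]
    rw [Finset.sum_congr rfl hptw, Finset.sum_add_distrib,
        Finset.sum_ite_eq' (Finset.range m) (k-1),
        Finset.sum_ite_eq' (Finset.range m) (k+1)]
    have ekm : (k-1) ∈ Finset.range m := Finset.mem_range.mpr (by omega)
    rw [if_pos ekm, hA]
    by_cases hlast : k + 1 < m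
    · have e2 : (k+1) ∈ Finset.range m := Finset.mem_range.mpr hlast
      rw [if_pos e2, hB]
      have : ¬ (k = m - 1) := by omega
      simp [this]
    · have hk1 : k = m - 1 := by omega
      have e2 : (k+1) ∉ Finset.range m := by simp; omega
      rw [if_neg e2, if_pos hk1]
      have hmk : (m:ℝ) = (k:ℝ) + 1 := by
        have : m = k + 1 := by omega
        exact_mod_cast congrArg (Nat.cast : ℕ → ℝ) this
      rw [hmk]
      have h21 : (2*(k:ℝ)+1) ≠ 0 := by nlinarith
      field_simp
      ring
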